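/- Let C be an n×n real matrix and H a positive real number. Assume that for every subset K ⊆ {1,…,n} and every cyclic permutation σ of K, one has Σ_{κ∈K} C_{κ,σ(κ)} ≥ |K|·max_{κ∈K}{C_{κκ}} + H·Σ_{κ∈K}|C_{κ,κ} − C_{σ(κ),σ(κ)}|. Then C is similar to a diagonally H-dominant matrix. -/

import Mathlib

/-- Tropical (min-plus) matrix product. -/
noncomputable def tropMul {l m o : Type*} [Fintype m] [Nonempty m]
    (A : Matrix l m ℝ) (B : Matrix m o ℝ) : Matrix l o ℝ :=
  fun i j => Finset.univ.inf' Finset.univ_nonempty fun t => A i t + B t j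

/-- Evaluation of a word over `{x, y}` (here `true` stands for `x`, `false` for `y`)
as a tropical matrix product; the empty word evaluates to the junk value `A`. -/
noncomputable def evalWord {n : ℕ} [NeZero n] (A B : Matrix (Fin n) (Fin n) ℝ) :
    List Bool → Matrix (Fin n) (Fin n) ℝ
  | [] => A
  | b :: t => t.foldl (fun M c => tropMul M (cond c A B)) (cond b A B)

/-- Tropical matrix power (`tropPow A k` is `A^k` for `k ≥ 1`; `A^0` is junk `= A`). -/
noncomputable def tropPow {n : ℕ} [NeZero n] (A : Matrix (Fin n) (Fin n) ℝ) (k : ℕ) :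
    Matrix (Fin n) (Fin n) ℝ :=
  evalWord A A (List.replicate k true)

/-- Tropical permanent. -/
noncomputable def tropPerm {n : ℕ} (A : Matrix (Fin n) (Fin n) ℝ) : ℝ :=
  Finset.univ.inf' Finset.univ_nonempty fun σ : Equiv.Perm (Fin n) => ∑ i, A i (σ i)

/-- `Σ(A)`: the set of permutations attaining the tropical permanent. -/
def minPerms {n : ℕ} (A : Matrix (Fin n) (Fin n) ℝ) : Set (Equiv.Perm (Fin n)) :=
  { σ | ∑ i, A i (σ i) = tropPerm A }

/-- A matrix is sign-nonsingular if all permutations in `Σ(A)` have the same parity. -/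
def SignNonsingular {n : ℕ} (A : Matrix (Fin n) (Fin n) ℝ) : Prop :=
  ∀ σ ∈ minPerms A, ∀ τ ∈ minPerms A, Equiv.Perm.sign σ = Equiv.Perm.sign τ

/-- A matrix is sign-singular if `Σ(A)` contains two permutations of different parity. -/
def SignSingular {n : ℕ} (A : Matrix (Fin n) (Fin n) ℝ) : Prop :=
  ∃ σ ∈ minPerms A, ∃ τ ∈ minPerms A, Equiv.Perm.sign σ ≠ Equiv.Perm.sign τ

/-- Similarity transformation determined by `s`. -/
def simTrans {n : ℕ} (s : Fin n → ℝ) (C : Matrix (Fin n) (Fin n) ℝ) :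
    Matrix (Fin n) (Fin n) ℝ :=
  fun i j => C i j + s i - s j

/-- Diagonally `H`-dominant matrix. -/
def DiagDominant {n : ℕ} (H : ℝ) (A : Matrix (Fin n) (Fin n) ℝ) : Prop :=
  ∀ i j, A i j ≥ max (A i i) (A j j) + H * |A i i - A j j|

/-- Diagonally `H`-dominant pair of matrices. -/
def DiagDomPair {n : ℕ} (H : ℝ) (A B : Matrix (Fin n) (Fin n) ℝ) : Prop :=
  (∀ i, A i i = B i i) ∧ DiagDominant H (fun i j => min (A i j) (B i j))

namespace Stmt9Aux

variable {α : Type*}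

/-- Weight of a path: sum of `F` over consecutive pairs. -/
noncomputable def pathW (F : α → α → ℝ) : List α → ℝ
  | [] => 0
  | [_] => 0
  | a :: b :: t => F a b + pathW F (b :: t)

theorem pathW_eq_sum (F : α → α → ℝ) (d : α) :
    ∀ l : List α, pathW F l = ∑ i ∈ Finset.range (l.length - 1),
      F (l.getD i d) (l.getD (i + 1) d)
  | [] => by simp [pathW]
  | [a] => by simp [pathW]
  | a :: b :: t => by
    rw [pathW]
    have IH := pathW_eq_sum F d (b :: t)
    simp only [List.length_cons]
    rw [show t.length + 1 + 1 - 1 = t.length + 1 from rfl, Finset.sum_range_succ']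
    simp only [List.length_cons, Nat.add_sub_cancel, List.getD_cons_succ,
      List.getD_cons_zero] at IH ⊢
    rw [IH]
    ring

theorem map_sum_range (G : α → ℝ) (d : α) :
    ∀ l : List α, (l.map G).sum = ∑ i ∈ Finset.range l.length, G (l.getD i d)
  | [] => by simp
  | a :: t => by
    rw [List.map_cons, List.sum_cons, List.length_cons, Finset.sum_range_succ']
    simp only [List.getD_cons_succ, List.getD_cons_zero]
    rw [map_sum_range G d t]
    ring

theorem cycle_sum [DecidableEq α] (F : α → α → ℝ) (l : List α) (hn : l.Nodup) (hne : l ≠ []) :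
    ∑ κ ∈ l.toFinset, F κ (l.formPerm κ) =
      pathW F l + F (l.getLast hne) (l.head hne) := by
  classical
  have hlen : 0 < l.length := List.length_pos_iff.mpr hne
  set d := l.head hne with hd
  rw [List.sum_toFinset _ hn, map_sum_range (fun κ => F κ (l.formPerm κ)) d l]
  have step : ∀ i ∈ Finset.range l.length,
      (fun κ => F κ (l.formPerm κ)) (l.getD i d)
        = F (l.getD i d) (l.getD ((i + 1) % l.length) d) := by
    intro i hi
    have hi' : i < l.length := Finset.mem_range.mp hi
    simp only
    rw [List.getD_eq_getElem l d hi', List.formPerm_apply_getElem l hn i hi',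
      List.getD_eq_getElem l d (Nat.mod_lt _ hlen)]
  rw [Finset.sum_congr rfl step, pathW_eq_sum F d l]
  obtain ⟨m, hm⟩ : ∃ m, l.length = m + 1 := ⟨l.length - 1, (Nat.succ_pred_eq_of_pos hlen).symm⟩
  simp only [hm, Nat.add_sub_cancel]
  rw [Finset.sum_range_succ]
  have step2 : ∀ i ∈ Finset.range m,
      F (l.getD i d) (l.getD ((i + 1) % (m + 1)) d) = F (l.getD i d) (l.getD (i + 1) d) := by
    intro i hi
    have : i < m := Finset.mem_range.mp hi
    rw [Nat.mod_eq_of_lt (by omega)]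
  rw [Finset.sum_congr rfl step2, Nat.mod_self]
  have h1 : l.getD m d = l.getLast hne := by
    rw [List.getLast_eq_getElem, show m = l.length - 1 by omega]
    exact List.getD_eq_getElem l d (by omega)
  have h2 : l.getD 0 d = l.head hne := by
    rw [List.head_eq_getElem_zero hne]
    exact List.getD_eq_getElem l d (by omega)
  rw [h1, h2]

theorem pathW_concat (F : α → α → ℝ) (b : α) :
    ∀ (l : List α) (hne : l ≠ []), pathW F (l ++ [b]) = pathW F l + F (l.getLast hne) b
  | [], hne => absurd rfl hne
  | [a], _ => by simp [pathW]
  | a :: c :: t, _ => by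
    have IH := pathW_concat F b (c :: t) (List.cons_ne_nil c t)
    calc pathW F ((a :: c :: t) ++ [b]) = F a c + pathW F ((c :: t) ++ [b]) := rfl
      _ = F a c + (pathW F (c :: t) + F ((c :: t).getLast (List.cons_ne_nil c t)) b) := by
          rw [IH]
      _ = pathW F (a :: c :: t) + F ((a :: c :: t).getLast (List.cons_ne_nil _ _)) b := by
          rw [pathW, List.getLast_cons (List.cons_ne_nil c t)]
          ring

theorem pathW_take_drop (F : α → α → ℝ) :
    ∀ (t : ℕ) (l : List α), t < l.length →
      pathW F l = pathW F (l.take (t + 1)) + pathW F (l.drop t)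
  | 0, [], h => by simp at h
  | 0, a :: l, _ => by
    show pathW F (a :: l) = pathW F [a] + pathW F (a :: l)
    rw [show pathW F [a] = 0 from rfl]
    ring
  | t + 1, [], h => by simp at h
  | t + 1, [a], h => by simp at h
  | t + 1, a :: c :: l, h => by
    have h' : t < (c :: l).length := by
      simp only [List.length_cons] at h ⊢; omega
    have IH := pathW_take_drop F t (c :: l) h'
    simp only [List.take_succ_cons, List.drop_succ_cons] at IH ⊢
    rw [show pathW F (a :: c :: l) = F a c + pathW F (c :: l) from rfl,
        show pathW F (a :: c :: List.take t l) = F a c + pathW F (c :: List.take t l) from rfl,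
        IH]
    ring

end Stmt9Aux

open Stmt9Aux

/-- If every cyclic permutation of every nonempty subset `K` satisfies
the stated inequality, then `C` is similar to a diagonally `H`-dominant matrix. -/
theorem stmt9 {n : ℕ} (C : Matrix (Fin n) (Fin n) ℝ) (H : ℝ) (hH : 0 < H)
    (hyp : ∀ (K : Finset (Fin n)) (hK : K.Nonempty) (σ : Equiv.Perm (Fin n)),
      (∀ i ∉ K, σ i = i) → σ.IsCycleOn (K : Set (Fin n)) →
      ∑ κ ∈ K, C κ (σ κ) ≥
        (K.card : ℝ) * K.sup' hK (fun κ => C κ κ) +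
          H * ∑ κ ∈ K, |C κ κ - C (σ κ) (σ κ)|) :
    ∃ s : Fin n → ℝ, DiagDominant H (simTrans s C) := by
  classical
  -- reduced edge weights
  set D : Fin n → Fin n → ℝ :=
    fun i j => C i j - max (C i i) (C j j) - H * |C i i - C j j| with hD
  -- every cycle has nonnegative reduced weight
  have cyc : ∀ (l : List (Fin n)) (hn : l.Nodup) (hne : l ≠ []),
      0 ≤ pathW D l + D (l.getLast hne) (l.head hne) := by
    intro l hn hne
    have hKne : l.toFinset.Nonempty := by
      rcases l with _ | ⟨a, t⟩
      · exact absurd rfl hne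
      · exact ⟨a, by simp⟩
    have hfix : ∀ i ∉ l.toFinset, l.formPerm i = i := fun i hi =>
      List.formPerm_apply_of_notMem (by simpa using hi)
    have hcyc : l.formPerm.IsCycleOn (l.toFinset : Set (Fin n)) := by
      rw [List.coe_toFinset]; exact hn.isCycleOn_formPerm
    have key := hyp l.toFinset hKne l.formPerm hfix hcyc
    have hmem : ∀ κ ∈ l.toFinset, l.formPerm κ ∈ l.toFinset := by
      intro κ hκ
      rw [List.mem_toFinset] at hκ ⊢
      exact List.formPerm_mem_iff_mem.mpr hκ
    have hmax : ∑ κ ∈ l.toFinset, max (C κ κ) (C (l.formPerm κ) (l.formPerm κ)) ≤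
        (l.toFinset.card : ℝ) * l.toFinset.sup' hKne (fun κ => C κ κ) := by
      rw [← nsmul_eq_mul, ← Finset.sum_const]
      exact Finset.sum_le_sum fun κ hκ =>
        max_le (Finset.le_sup' (fun κ => C κ κ) hκ) (Finset.le_sup' (fun κ => C κ κ) (hmem κ hκ))
    have hsum : ∑ κ ∈ l.toFinset, D κ (l.formPerm κ) =
        ∑ κ ∈ l.toFinset, C κ (l.formPerm κ)
          - ∑ κ ∈ l.toFinset, max (C κ κ) (C (l.formPerm κ) (l.formPerm κ))
          - H * ∑ κ ∈ l.toFinset, |C κ κ - C (l.formPerm κ) (l.formPerm κ)| := by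
      rw [Finset.mul_sum, ← Finset.sum_sub_distrib, ← Finset.sum_sub_distrib]
    have hDpos : 0 ≤ ∑ κ ∈ l.toFinset, D κ (l.formPerm κ) := by
      rw [hsum]; linarith
    rwa [cycle_sum D l hn hne] at hDpos
  -- shortest simple-path potentials
  let Paths : Fin n → Finset {l : List (Fin n) // l.Nodup} := fun j =>
    Finset.univ.filter (fun L => L.1.getLast? = some j)
  have hPne : ∀ j, (Paths j).Nonempty := fun j =>
    ⟨⟨[j], List.nodup_singleton j⟩, by simp [Paths]⟩
  set s : Fin n → ℝ := fun j => (Paths j).inf' (hPne j) (fun L => pathW D L.1) with hs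
  have claim : ∀ i j, s j ≤ s i + D i j := by
    intro i j
    obtain ⟨L, hLmem, hLval⟩ := Finset.exists_mem_eq_inf' (hPne i) (fun L => pathW D L.1)
    have hLlast? : L.1.getLast? = some i := by
      simpa [Paths] using hLmem
    have hne : L.1 ≠ [] := by
      intro h; rw [h] at hLlast?; simp at hLlast?
    have hlast : L.1.getLast hne = i := by
      rw [List.getLast?_eq_getLast_of_ne_nil hne] at hLlast?
      exact Option.some_injective _ hLlast?
    have hsi : s i = pathW D L.1 := hLval
    by_cases hj : j ∈ L.1
    · obtain ⟨t, ht, hLt⟩ := List.mem_iff_getElem.mp hj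
      have hsplit := pathW_take_drop D t L.1 ht
      have hPlen : (L.1.take (t + 1)).length = t + 1 := by
        rw [List.length_take]; omega
      have hPne' : L.1.take (t + 1) ≠ [] :=
        List.ne_nil_of_length_pos (by omega)
      have hSlen : (L.1.drop t).length = L.1.length - t := List.length_drop
      have hSne' : L.1.drop t ≠ [] :=
        List.ne_nil_of_length_pos (by omega)
      have hPlast : (L.1.take (t + 1)).getLast hPne' = j := by
        rw [List.getLast_eq_getElem, List.getElem_take]
        simp only [hPlen, Nat.add_sub_cancel]
        exact hLt
      have hShead : (L.1.drop t).head hSne' = j := by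
        rw [List.head_eq_getElem_zero, List.getElem_drop]
        simp only [Nat.add_zero]
        exact hLt
      have hSlast : (L.1.drop t).getLast hSne' = i := by
        rw [List.getLast_eq_getElem, List.getElem_drop]
        have e : t + ((L.1.drop t).length - 1) = L.1.length - 1 := by omega
        simp only [e]
        exact (List.getLast_eq_getElem hne).symm.trans hlast
      have hPmem : (⟨L.1.take (t + 1), L.2.sublist (List.take_sublist _ _)⟩ :
          {l : List (Fin n) // l.Nodup}) ∈ Paths j := by
        simp only [Paths, Finset.mem_filter, Finset.mem_univ, true_and]
        rw [List.getLast?_eq_getLast_of_ne_nil hPne', hPlast]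
      have h1 : s j ≤ pathW D (L.1.take (t + 1)) := Finset.inf'_le _ hPmem
      have h2 := cyc (L.1.drop t) (L.2.sublist (List.drop_sublist _ _)) hSne'
      rw [hSlast, hShead] at h2
      linarith
    · have hnodup : (L.1 ++ [j]).Nodup := by
        rw [List.nodup_append]
        refine ⟨L.2, List.nodup_singleton j, fun a ha b hb => ?_⟩
        rw [List.mem_singleton] at hb
        exact fun hab => hj (by rw [← hb, ← hab]; exact ha)
      have hMmem : (⟨L.1 ++ [j], hnodup⟩ : {l : List (Fin n) // l.Nodup}) ∈ Paths j := by
        simp [Paths, List.getLast?_concat]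
      have h1 : s j ≤ pathW D (L.1 ++ [j]) := Finset.inf'_le _ hMmem
      rw [pathW_concat D j L.1 hne, hlast] at h1
      linarith
  refine ⟨s, fun i j => ?_⟩
  have h := claim i j
  have hii : simTrans s C i i = C i i := by simp [simTrans]
  have hjj : simTrans s C j j = C j j := by simp [simTrans]
  rw [hii, hjj]
  show C i j + s i - s j ≥ _
  have hDij : D i j = C i j - max (C i i) (C j j) - H * |C i i - C j j| := by rw [hD]
  rw [hDij] at h
  linarith
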